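/- With the notation of the previous statement and assuming η̄_r ≠ 0, setting γ_i = γ̄_i / η̄_r and η_j = η̄_j / η̄_r for 1 ≤ j ≤ r − 1, the last global parity satisfies G_r = Σ_{i=1}^k γ_i D_i + Σ_{j=1}^{r−1} η_j G_j, and all coefficients γ_i, η_j are nonzero. -/

import Mathlib

/-- Partial fraction identity from Lagrange interpolation of the constant 1. -/
lemma stmt4_key {F : Type*} [Field F] {n : ℕ} (x : F) (b : Fin (n + 1) → F)
    (hb : Function.Injective b) (hx : ∀ z, x - b z ≠ 0) :
    ∑ j, (∏ z ∈ Finset.univ.erase j, (b j - b z)⁻¹) * (x - b j)⁻¹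
      = ∏ z, (x - b z)⁻¹ := by
  have h1 := Lagrange.sum_basis (Set.injOn_of_injective hb) (Finset.univ_nonempty (α := Fin (n+1)))
  have h2 := congrArg (Polynomial.eval x) h1
  simp only [Polynomial.eval_finset_sum, Lagrange.basis, Lagrange.basisDivisor,
    Polynomial.eval_prod, Polynomial.eval_mul, Polynomial.eval_C, Polynomial.eval_sub,
    Polynomial.eval_X, Polynomial.eval_one] at h2
  calc ∑ j, (∏ z ∈ Finset.univ.erase j, (b j - b z)⁻¹) * (x - b j)⁻¹
      = ∑ j, (∏ z ∈ Finset.univ.erase j, ((b j - b z)⁻¹ * (x - b z)))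
          * ∏ z, (x - b z)⁻¹ := by
        refine Finset.sum_congr rfl fun j _ => ?_
        rw [Finset.prod_mul_distrib,
          ← Finset.mul_prod_erase Finset.univ (fun z => (x - b z)⁻¹) (Finset.mem_univ j)]
        have hQ : (∏ z ∈ Finset.univ.erase j, (x - b z))
            * (∏ z ∈ Finset.univ.erase j, (x - b z)⁻¹) = 1 := by
          rw [← Finset.prod_mul_distrib]
          exact Finset.prod_eq_one fun z _ => mul_inv_cancel₀ (hx z)
        linear_combination (-((∏ z ∈ Finset.univ.erase j, (b j - b z)⁻¹) * (x - b j)⁻¹)) * hQ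
    _ = (∑ j, ∏ z ∈ Finset.univ.erase j, ((b j - b z)⁻¹ * (x - b z)))
          * ∏ z, (x - b z)⁻¹ := by rw [Finset.sum_mul]
    _ = ∏ z, (x - b z)⁻¹ := by rw [h2, one_mul]

/-- Equation (11): decomposition of the last global parity with all-nonzero coefficients. -/
theorem stmt4 {F V : Type*} [Field F] [CharP F 2] [AddCommGroup V] [Module F V]
    {k r : ℕ} (a : Fin k → F) (b : Fin (r + 1) → F)
    (hab : Function.Injective (Sum.elim a b)) (D : Fin k → V)
    (G : Fin (r + 1) → V) (hG : ∀ j, G j = ∑ i, (b j - a i)⁻¹ • D i)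
    (γbar : Fin k → F) (hγbar : ∀ i, γbar i = ∏ z, (a i - b z)⁻¹)
    (ηbar : Fin (r + 1) → F)
    (hηbar : ∀ j, ηbar j = ∏ z ∈ Finset.univ.erase j, (b j - b z)⁻¹)
    (hlast : ηbar (Fin.last r) ≠ 0) :
    (G (Fin.last r) = ∑ i, (γbar i / ηbar (Fin.last r)) • D i
        + ∑ j : Fin r, (ηbar j.castSucc / ηbar (Fin.last r)) • G j.castSucc)
      ∧ (∀ i, γbar i / ηbar (Fin.last r) ≠ 0)
      ∧ (∀ j : Fin r, ηbar j.castSucc / ηbar (Fin.last r) ≠ 0) := by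
  have hb : Function.Injective b := fun z w h => by
    have := hab (a₁ := Sum.inr z) (a₂ := Sum.inr w) (by simpa using h)
    simpa using this
  have haneb : ∀ i z, a i - b z ≠ 0 := fun i z h => by
    have := hab (a₁ := Sum.inl i) (a₂ := Sum.inr z) (by simpa using sub_eq_zero.mp h)
    simp at this
  have hcomm : ∀ u v : F, u - v = v - u := fun u v => by
    rw [CharTwo.sub_eq_add, CharTwo.sub_eq_add, add_comm]
  have hbneb : ∀ j z : Fin (r+1), j ≠ z → b j - b z ≠ 0 := fun j z hjz h =>
    hjz (hb (sub_eq_zero.mp h))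
  have hηne : ∀ j, ηbar j ≠ 0 := fun j => by
    rw [hηbar]
    exact Finset.prod_ne_zero_iff.mpr fun z hz =>
      inv_ne_zero (hbneb j z (Finset.ne_of_mem_erase hz).symm)
  have hγne : ∀ i, γbar i ≠ 0 := fun i => by
    rw [hγbar]
    exact Finset.prod_ne_zero_iff.mpr fun z _ => inv_ne_zero (haneb i z)
  -- key scalar identity for each i
  have hscal : ∀ i, (b (Fin.last r) - a i)⁻¹
      = γbar i / ηbar (Fin.last r)
        + ∑ j : Fin r, ηbar j.castSucc / ηbar (Fin.last r) * (b j.castSucc - a i)⁻¹ := by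
    intro i
    have hkey := stmt4_key (a i) b hb (haneb i)
    -- rewrite (a i - b j)⁻¹ as (b j - a i)⁻¹ using char 2
    have hkey' : ∑ j, ηbar j * (b j - a i)⁻¹ = γbar i := by
      rw [hγbar]
      rw [← hkey]
      refine Finset.sum_congr rfl fun j _ => ?_
      rw [hηbar, hcomm (a i) (b j)]
    rw [Fin.sum_univ_castSucc] at hkey'
    set S := ∑ j : Fin r, ηbar j.castSucc * (b j.castSucc - a i)⁻¹ with hS
    have h2S : S + S = 0 := CharTwo.add_self_eq_zero S
    have h3 : ηbar (Fin.last r) * (b (Fin.last r) - a i)⁻¹ = γbar i + S := by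
      linear_combination hkey' - h2S
    have hsum : ∑ j : Fin r, ηbar j.castSucc / ηbar (Fin.last r) * (b j.castSucc - a i)⁻¹
        = S / ηbar (Fin.last r) := by
      rw [hS, Finset.sum_div]
      exact Finset.sum_congr rfl fun j _ => by rw [div_mul_eq_mul_div]
    rw [hsum, ← add_div, eq_div_iff hlast]
    linear_combination h3
  refine ⟨?_, fun i => div_ne_zero (hγne i) hlast,
    fun j => div_ne_zero (hηne j.castSucc) hlast⟩
  simp only [hG]
  have hswap : ∑ j : Fin r, (ηbar j.castSucc / ηbar (Fin.last r))
        • ∑ i, (b j.castSucc - a i)⁻¹ • D i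
      = ∑ i, (∑ j : Fin r, ηbar j.castSucc / ηbar (Fin.last r) * (b j.castSucc - a i)⁻¹) • D i := by
    calc ∑ j : Fin r, (ηbar j.castSucc / ηbar (Fin.last r))
            • ∑ i, (b j.castSucc - a i)⁻¹ • D i
        = ∑ j : Fin r, ∑ i,
            (ηbar j.castSucc / ηbar (Fin.last r) * (b j.castSucc - a i)⁻¹) • D i := by
          refine Finset.sum_congr rfl fun j _ => ?_
          rw [Finset.smul_sum]
          exact Finset.sum_congr rfl fun i _ => by rw [smul_smul]
      _ = ∑ i, ∑ j : Fin r,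
            (ηbar j.castSucc / ηbar (Fin.last r) * (b j.castSucc - a i)⁻¹) • D i :=
          Finset.sum_comm
      _ = ∑ i, (∑ j : Fin r,
            ηbar j.castSucc / ηbar (Fin.last r) * (b j.castSucc - a i)⁻¹) • D i := by
          exact Finset.sum_congr rfl fun i _ => (Finset.sum_smul).symm
  rw [hswap, ← Finset.sum_add_distrib]
  refine Finset.sum_congr rfl fun i _ => ?_
  rw [← add_smul, hscal i]
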